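/- With the hypotheses and notation of the transport construction: if u, v ∈ M satisfy x^u, x^v ∈ S_x and u ≼ v, then the associated sequences satisfy u_i ≼ v_i for all i = 0,…,r. More precisely, if v = uw with w ∈ M and w₀,…,w_r is the sequence obtained from applying the construction to (x^u, w), then v_i = u_i w_i for all i. -/

import Mathlib

namespace GarsideFormal

variable (G : Type*) [Group G]

/-- An atom of the submonoid `M`: a nontrivial element admitting no nontrivial
factorization inside `M`. -/
def IsMAtom (M : Submonoid G) (a : G) : Prop :=
  a ∈ M ∧ a ≠ 1 ∧ ∀ b ∈ M, ∀ c ∈ M, a = b * c → b = 1 ∨ c = 1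

/-- A Garside monoid `M`, realized as a submonoid (positive cone) of its group of
fractions `G`, together with its Garside element `δ`, left gcd and left lcm
operations (extended to `G`), and the cycling operation `cyc`. -/
structure Garside where
  M : Submonoid G
  δ : G
  gcd : G → G → G
  lcm : G → G → G
  cyc : G → G
  δ_mem : δ ∈ M
  /-- `G` is the group of fractions of `M`. -/
  fractions : ∀ g : G, ∃ a ∈ M, ∃ b ∈ M, g = a⁻¹ * b
  /-- `M` is generated by its atoms. -/
  atoms_generate : Submonoid.closure {a : G | IsMAtom G M a} = M
  /-- Atomicity: bounded factorization lengths into atoms. -/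
  atomic_bound : ∀ a ∈ M, ∃ N : ℕ, ∀ L : List G,
      (∀ b ∈ L, IsMAtom G M b) → L.prod = a → L.length ≤ N
  /-- Left divisors of `δ` coincide with right divisors of `δ`. -/
  divs_eq : {x : G | x ∈ M ∧ x⁻¹ * δ ∈ M} = {x : G | x ∈ M ∧ δ * x⁻¹ ∈ M}
  divs_finite : Set.Finite {x : G | x ∈ M ∧ x⁻¹ * δ ∈ M}
  divs_generate : Submonoid.closure {x : G | x ∈ M ∧ x⁻¹ * δ ∈ M} = M
  gcd_dvd_left : ∀ a b : G, (gcd a b)⁻¹ * a ∈ M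
  gcd_dvd_right : ∀ a b : G, (gcd a b)⁻¹ * b ∈ M
  gcd_greatest : ∀ a b x : G, x⁻¹ * a ∈ M → x⁻¹ * b ∈ M → x⁻¹ * gcd a b ∈ M
  lcm_dvd_left : ∀ a b : G, a⁻¹ * lcm a b ∈ M
  lcm_dvd_right : ∀ a b : G, b⁻¹ * lcm a b ∈ M
  lcm_least : ∀ a b x : G, a⁻¹ * x ∈ M → b⁻¹ * x ∈ M → (lcm a b)⁻¹ * x ∈ M
  /-- Cycling: if `k = inf x` then `cyc x = x ^ (τ⁻ᵏ A₁)` where `A₁ = δ ∧ δ⁻ᵏ x`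
  is the first factor of the left normal form of `x` (when `len x = 0` this
  gcd is `1` and `cyc x = x`). -/
  cyc_spec : ∀ (x : G) (k : ℤ),
      ((δ ^ k)⁻¹ * x ∈ M ∧ ∀ j : ℤ, (δ ^ j)⁻¹ * x ∈ M → j ≤ k) →
      cyc x = (δ ^ k * gcd δ ((δ ^ k)⁻¹ * x) * (δ ^ k)⁻¹)⁻¹ * x *
              (δ ^ k * gcd δ ((δ ^ k)⁻¹ * x) * (δ ^ k)⁻¹)

variable {G}

namespace Garside

variable (S : Garside G)

/-- Left divisibility `a ≼ b`. -/
def dvd (a b : G) : Prop := a⁻¹ * b ∈ S.M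

/-- Simple elements: the (left) divisors of `δ` in `M`. -/
def Simple (a : G) : Prop := a ∈ S.M ∧ a⁻¹ * S.δ ∈ S.M

/-- `k` is the infimum of `x`: maximal with `δ^k ≼ x`. -/
def IsInf (x : G) (k : ℤ) : Prop :=
  (S.δ ^ k)⁻¹ * x ∈ S.M ∧ ∀ j : ℤ, (S.δ ^ j)⁻¹ * x ∈ S.M → j ≤ k

/-- `s` is the supremum of `x`: minimal with `x ≼ δ^s`. -/
def IsSup (x : G) (s : ℤ) : Prop :=
  x⁻¹ * S.δ ^ s ∈ S.M ∧ ∀ j : ℤ, x⁻¹ * S.δ ^ j ∈ S.M → s ≤ j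

/-- `y` lies in the super summit set of `x`: `y` is conjugate to `x`, with
maximal infimum and minimal supremum among all conjugates of `x`. -/
def InSS (x y : G) : Prop :=
  IsConj x y ∧
  (∃ k : ℤ, S.IsInf y k ∧ ∀ z : G, IsConj x z → ∀ k' : ℤ, S.IsInf z k' → k' ≤ k) ∧
  (∃ s : ℤ, S.IsSup y s ∧ ∀ z : G, IsConj x z → ∀ s' : ℤ, S.IsSup z s' → s ≤ s')

/-- `y` lies in the ultra summit set of `x`: it is in the super summit set and
periodic under cycling. -/
def InUS (x y : G) : Prop :=
  S.InSS x y ∧ ∃ n : ℕ, 0 < n ∧ S.cyc^[n] y = y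

/-- `τ^k(z) = δ⁻ᵏ z δᵏ`, where `τ : z ↦ δ⁻¹zδ`. -/
def tauPow (k : ℤ) (z : G) : G := (S.δ ^ k)⁻¹ * z * S.δ ^ k

end Garside

/-- The ordered product `A (i+1) * A (i+2) * ⋯ * A r`. -/
def prodSeg (A : ℕ → G) (i r : ℕ) : G :=
  ((List.range (r - i)).map (fun j => A (i + 1 + j))).prod

namespace Garside

variable (S : Garside G)

/-- `x` has left normal form `δ^k A₁ ⋯ A_r`: each `Aᵢ` is a nontrivial simple
element and `(Aᵢ⁻¹ δ) ∧ A_{i+1} = 1`. -/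
def IsNormalForm (x : G) (k : ℤ) (r : ℕ) (A : ℕ → G) : Prop :=
  x = S.δ ^ k * prodSeg A 0 r ∧
  (∀ i, 1 ≤ i → i ≤ r → S.Simple (A i) ∧ A i ≠ 1) ∧
  (∀ i, 1 ≤ i → i < r → S.gcd ((A i)⁻¹ * S.δ) (A (i + 1)) = 1)

/-- The sequence `u₀, …, u_r` of the transport construction for `(x, u)`,
where `x` has normal form `δ^k A₁ ⋯ A_r`:
`u₀ = τᵏ(u)`, `u_r = u`, and `uᵢ = (A_{i+1} ⋯ A_r u) ∧ δ·τ(Aᵢ⁻¹ u_{i-1})`. -/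
def IsTransportSeq (k : ℤ) (r : ℕ) (A : ℕ → G) (u : G) (useq : ℕ → G) : Prop :=
  useq 0 = S.tauPow k u ∧ useq r = u ∧
  ∀ i, 1 ≤ i → i ≤ r →
    useq i = S.gcd (prodSeg A i r * u) (S.δ * S.tauPow 1 ((A i)⁻¹ * useq (i - 1)))

/-- The transport `φ_x(u) = τ⁻ᵏ(u₁) = τ⁻ᵏ(A₁⁻¹ · τᵏ(u) · (δ ∧ δ⁻ᵏ(x^u)))`,
where `k = inf x` and `A₁ = δ ∧ δ⁻ᵏ x`. -/
def transp (k : ℤ) (x u : G) : G :=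
  S.δ ^ k *
    ((S.gcd S.δ ((S.δ ^ k)⁻¹ * x))⁻¹ * S.tauPow k u *
      S.gcd S.δ ((S.δ ^ k)⁻¹ * (u⁻¹ * x * u))) * (S.δ ^ k)⁻¹

end Garside

namespace Garside

variable {G : Type*} [Group G] (S : Garside G)

/-- Conjugation by `g` preserves `M` provided it sends divisors of `δ` into `M`. -/
lemma conj_mem_of_divs (g : G)
    (hg : ∀ d ∈ {x : G | x ∈ S.M ∧ x⁻¹ * S.δ ∈ S.M}, g⁻¹ * d * g ∈ S.M) :
    ∀ z ∈ S.M, g⁻¹ * z * g ∈ S.M := by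
  intro z hz
  have hle : S.M ≤ Submonoid.comap ((MulAut.conj g⁻¹) : G →* G) S.M := by
    conv_lhs => rw [← S.divs_generate]
    apply Submonoid.closure_le.mpr
    intro d hd
    simpa [Submonoid.mem_comap, MulAut.conj_apply] using hg d hd
  have := hle hz
  simpa [Submonoid.mem_comap, MulAut.conj_apply] using this

lemma tau_mem : ∀ z ∈ S.M, S.δ⁻¹ * z * S.δ ∈ S.M := by
  apply S.conj_mem_of_divs
  rintro d ⟨hdM, hy⟩
  have hyR : (d⁻¹ * S.δ) ∈ {x : G | x ∈ S.M ∧ S.δ * x⁻¹ ∈ S.M} := by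
    refine ⟨hy, ?_⟩
    have e : S.δ * (d⁻¹ * S.δ)⁻¹ = d := by group
    rw [e]; exact hdM
  have hyL : (d⁻¹ * S.δ) ∈ {x : G | x ∈ S.M ∧ x⁻¹ * S.δ ∈ S.M} := by
    rw [S.divs_eq]; exact hyR
  have e : S.δ⁻¹ * d * S.δ = (d⁻¹ * S.δ)⁻¹ * S.δ := by group
  rw [e]; exact hyL.2

lemma tau_inv_mem : ∀ z ∈ S.M, S.δ * z * S.δ⁻¹ ∈ S.M := by
  have h := S.conj_mem_of_divs S.δ⁻¹ ?_
  · intro z hz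
    have := h z hz
    simpa using this
  · rintro d hd
    have hdR : d ∈ {x : G | x ∈ S.M ∧ S.δ * x⁻¹ ∈ S.M} := by rw [← S.divs_eq]; exact hd
    have hwL : (S.δ * d⁻¹) ∈ {x : G | x ∈ S.M ∧ x⁻¹ * S.δ ∈ S.M} := by
      refine ⟨hdR.2, ?_⟩
      have e : (S.δ * d⁻¹)⁻¹ * S.δ = d := by group
      rw [e]; exact hd.1
    have hwR : (S.δ * d⁻¹) ∈ {x : G | x ∈ S.M ∧ S.δ * x⁻¹ ∈ S.M} := by
      rw [← S.divs_eq]; exact hwL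
    have e : (S.δ⁻¹)⁻¹ * d * S.δ⁻¹ = S.δ * (S.δ * d⁻¹)⁻¹ := by group
    rw [e]; exact hwR.2

lemma tauPow_mem (k : ℤ) : ∀ z ∈ S.M, (S.δ ^ k)⁻¹ * z * S.δ ^ k ∈ S.M := by
  induction k using Int.induction_on with
  | zero => intro z hz; simpa using hz
  | succ n ih =>
      intro z hz
      have h1 := S.tau_mem _ (ih z hz)
      have e : (S.δ ^ ((n : ℤ) + 1))⁻¹ * z * S.δ ^ ((n : ℤ) + 1)
          = S.δ⁻¹ * ((S.δ ^ (n : ℤ))⁻¹ * z * S.δ ^ (n : ℤ)) * S.δ := by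
        rw [zpow_add_one]; group
      rw [e]; exact h1
  | pred n ih =>
      intro z hz
      have h1 := S.tau_inv_mem _ (ih z hz)
      have e : (S.δ ^ (-(n : ℤ) - 1))⁻¹ * z * S.δ ^ (-(n : ℤ) - 1)
          = S.δ * ((S.δ ^ (-(n : ℤ)))⁻¹ * z * S.δ ^ (-(n : ℤ))) * S.δ⁻¹ := by
        rw [zpow_sub_one]; group
      rw [e]; exact h1

/-- Helper: arbitrarily long atom factorizations from a repeated list. -/
private lemma rep_aux (l : List G) (n : ℕ) :
    ∃ L : List G, (∀ b ∈ L, b ∈ l) ∧ L.prod = l.prod ^ n ∧ L.length = n * l.length := by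
  induction n with
  | zero => exact ⟨[], by simp, by simp, by simp⟩
  | succ n ih =>
      obtain ⟨L, h1, h2, h3⟩ := ih
      refine ⟨l ++ L, ?_, ?_, ?_⟩
      · intro b hb; rcases List.mem_append.mp hb with h | h
        · exact h
        · exact h1 b h
      · rw [List.prod_append, h2, pow_succ']
      · rw [List.length_append, h3]; ring

/-- The monoid `M` has no nontrivial units. -/
lemma no_units : ∀ p ∈ S.M, p⁻¹ ∈ S.M → p = 1 := by
  intro p hp hp'
  by_contra hne
  obtain ⟨Lp, hLp, hLpprod⟩ :=
    Submonoid.exists_list_of_mem_closure (by rw [S.atoms_generate]; exact hp)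
  obtain ⟨Lq, hLq, hLqprod⟩ :=
    Submonoid.exists_list_of_mem_closure (by rw [S.atoms_generate]; exact hp')
  obtain ⟨N, hN⟩ := S.atomic_bound 1 (one_mem _)
  obtain ⟨L, h1, h2, h3⟩ := rep_aux (Lp ++ Lq) (N + 1)
  have hatoms : ∀ b ∈ L, IsMAtom G S.M b := by
    intro b hb
    rcases List.mem_append.mp (h1 b hb) with h | h
    · exact hLp b h
    · exact hLq b h
  have hprod : L.prod = 1 := by
    rw [h2, List.prod_append, hLpprod, hLqprod]; simp
  have hlen := hN L hatoms hprod
  have hLpne : 0 < Lp.length := by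
    rcases Lp with _ | ⟨a, l⟩
    · exfalso; apply hne; rw [← hLpprod]; simp
    · simp
  rw [h3, List.length_append] at hlen
  nlinarith [hlen, hLpne]

lemma dvd_antisymm {a b : G} (h1 : a⁻¹ * b ∈ S.M) (h2 : b⁻¹ * a ∈ S.M) : a = b := by
  have h3 : (a⁻¹ * b)⁻¹ ∈ S.M := by
    have e : (a⁻¹ * b)⁻¹ = b⁻¹ * a := by group
    rw [e]; exact h2
  have := S.no_units _ h1 h3
  have e : a * (a⁻¹ * b) = b := by group
  rw [← e, this, mul_one]

/-- The left gcd is invariant under left translation. -/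
lemma gcd_mul_left (c a b : G) : S.gcd (c * a) (c * b) = c * S.gcd a b := by
  apply S.dvd_antisymm
  · -- gcd (ca) (cb) divides c * gcd a b
    have hga : (c⁻¹ * S.gcd (c * a) (c * b))⁻¹ * a ∈ S.M := by
      have h := S.gcd_dvd_left (c * a) (c * b)
      have e : (c⁻¹ * S.gcd (c * a) (c * b))⁻¹ * a = (S.gcd (c * a) (c * b))⁻¹ * (c * a) := by
        group
      rw [e]; exact h
    have hgb : (c⁻¹ * S.gcd (c * a) (c * b))⁻¹ * b ∈ S.M := by
      have h := S.gcd_dvd_right (c * a) (c * b)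
      have e : (c⁻¹ * S.gcd (c * a) (c * b))⁻¹ * b = (S.gcd (c * a) (c * b))⁻¹ * (c * b) := by
        group
      rw [e]; exact h
    have h := S.gcd_greatest a b _ hga hgb
    have e : (S.gcd (c * a) (c * b))⁻¹ * (c * S.gcd a b)
        = (c⁻¹ * S.gcd (c * a) (c * b))⁻¹ * S.gcd a b := by group
    rw [e]; exact h
  · -- c * gcd a b divides gcd (ca) (cb)
    have hga : (c * S.gcd a b)⁻¹ * (c * a) ∈ S.M := by
      have h := S.gcd_dvd_left a b
      have e : (c * S.gcd a b)⁻¹ * (c * a) = (S.gcd a b)⁻¹ * a := by group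
      rw [e]; exact h
    have hgb : (c * S.gcd a b)⁻¹ * (c * b) ∈ S.M := by
      have h := S.gcd_dvd_right a b
      have e : (c * S.gcd a b)⁻¹ * (c * b) = (S.gcd a b)⁻¹ * b := by group
      rw [e]; exact h
    exact S.gcd_greatest (c * a) (c * b) _ hga hgb

end Garside

/-- Telescoping of the conjugated segment product. -/
lemma prodSeg_conj {G : Type*} [Group G] (A uu : ℕ → G) (i n : ℕ) :
    ((List.range n).map (fun j => (uu (i + j))⁻¹ * A (i + 1 + j) * uu (i + 1 + j))).prod
      = (uu i)⁻¹ * ((List.range n).map (fun j => A (i + 1 + j))).prod * uu (i + n) := by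
  induction n with
  | zero => simp
  | succ n ih =>
      rw [List.range_succ, List.map_append, List.map_append, List.prod_append,
        List.prod_append, ih]
      have e : i + (n + 1) = i + 1 + n := by omega
      rw [e]
      simp only [List.map_cons, List.map_nil, List.prod_cons, List.prod_nil]
      group

lemma prodSeg_conj' {G : Type*} [Group G] (A uu : ℕ → G) {i r : ℕ} (h : i ≤ r) :
    prodSeg (fun j => (uu (j - 1))⁻¹ * A j * uu j) i r
      = (uu i)⁻¹ * prodSeg A i r * uu r := by
  unfold prodSeg
  have hmap : ((List.range (r - i)).map (fun j => (uu (i + 1 + j - 1))⁻¹ *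
      A (i + 1 + j) * uu (i + 1 + j)))
      = ((List.range (r - i)).map (fun j => (uu (i + j))⁻¹ * A (i + 1 + j) * uu (i + 1 + j))) := by
    apply List.map_congr_left
    intro j _
    have e : i + 1 + j - 1 = i + j := by omega
    rw [e]
  rw [hmap, prodSeg_conj A uu i (r - i)]
  have e : i + (r - i) = r := by omega
  rw [e]

/-- Monotonicity of the transport construction: if `u ≼ v` then `uᵢ ≼ vᵢ` for
all `i`; more precisely, if `v = u w` and `w₀,…,w_r` is the sequence for
`(x^u, w)` (with respect to the normal form `δ^k (u₀⁻¹A₁u₁)⋯(u_{r-1}⁻¹A_ru_r)`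
of `x^u`), then `vᵢ = uᵢ wᵢ` for all `i`. -/
theorem transport_seq_monotone {G : Type*} [Group G] (S : Garside G)
    (x u v : G) (k : ℤ) (r : ℕ) (A : ℕ → G)
    (hr : 1 ≤ r) (hnf : S.IsNormalForm x k r A) (hx : S.InSS x x)
    (hu : u ∈ S.M) (hv : v ∈ S.M)
    (hxu : S.InSS x (u⁻¹ * x * u)) (hxv : S.InSS x (v⁻¹ * x * v))
    (useq vseq : ℕ → G)
    (hus : S.IsTransportSeq k r A u useq) (hvs : S.IsTransportSeq k r A v vseq)
    (huv : u⁻¹ * v ∈ S.M) :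
    (∀ i, i ≤ r → (useq i)⁻¹ * vseq i ∈ S.M) ∧
    ∀ wseq : ℕ → G,
      S.IsTransportSeq k r (fun i => (useq (i - 1))⁻¹ * A i * useq i) (u⁻¹ * v) wseq →
      ∀ i, i ≤ r → vseq i = useq i * wseq i := by
  obtain ⟨hu0, hur, hurec⟩ := hus
  obtain ⟨hv0, hvr, hvrec⟩ := hvs
  have key1 : ∀ i, i ≤ r → (useq i)⁻¹ * vseq i ∈ S.M := by
    intro i
    induction i with
    | zero =>
        intro _
        rw [hu0, hv0]
        have e : (S.tauPow k u)⁻¹ * S.tauPow k v = (S.δ ^ k)⁻¹ * (u⁻¹ * v) * S.δ ^ k := by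
          unfold Garside.tauPow; group
        rw [e]; exact S.tauPow_mem k _ huv
    | succ i ih =>
        intro hle
        have ihm := ih (by omega)
        rw [hurec (i + 1) (by omega) hle, hvrec (i + 1) (by omega) hle]
        simp only [Nat.add_sub_cancel]
        set P := prodSeg A (i + 1) r with hP
        set g := S.gcd (P * u) (S.δ * S.tauPow 1 ((A (i + 1))⁻¹ * useq i)) with hg
        apply S.gcd_greatest
        · have h1 := S.gcd_dvd_left (P * u) (S.δ * S.tauPow 1 ((A (i + 1))⁻¹ * useq i))
          have e : g⁻¹ * (P * v) = (g⁻¹ * (P * u)) * (u⁻¹ * v) := by group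
          rw [e]; exact S.M.mul_mem h1 huv
        · have h2 := S.gcd_dvd_right (P * u) (S.δ * S.tauPow 1 ((A (i + 1))⁻¹ * useq i))
          have h3 := S.tauPow_mem 1 _ ihm
          have e : g⁻¹ * (S.δ * S.tauPow 1 ((A (i + 1))⁻¹ * vseq i))
              = (g⁻¹ * (S.δ * S.tauPow 1 ((A (i + 1))⁻¹ * useq i))) *
                ((S.δ ^ (1 : ℤ))⁻¹ * ((useq i)⁻¹ * vseq i) * S.δ ^ (1 : ℤ)) := by
            unfold Garside.tauPow; group
          rw [e]; exact S.M.mul_mem h2 h3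
  refine ⟨key1, ?_⟩
  intro wseq hws
  obtain ⟨hw0, hwr, hwrec⟩ := hws
  intro i
  induction i with
  | zero =>
      intro _
      rw [hu0, hv0, hw0]
      unfold Garside.tauPow; group
  | succ i ih =>
      intro hle
      have ihe := ih (by omega)
      rw [hvrec (i + 1) (by omega) hle, hwrec (i + 1) (by omega) hle]
      simp only [Nat.add_sub_cancel]
      rw [prodSeg_conj' A useq hle, hur]
      have hwi : wseq i = (useq i)⁻¹ * vseq i := by rw [ihe]; group
      have eX : (useq (i + 1))⁻¹ * prodSeg A (i + 1) r * u * (u⁻¹ * v)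
          = (useq (i + 1))⁻¹ * (prodSeg A (i + 1) r * v) := by group
      have eY : S.δ * S.tauPow 1 (((useq i)⁻¹ * A (i + 1) * useq (i + 1))⁻¹ * wseq i)
          = (useq (i + 1))⁻¹ * (S.δ * S.tauPow 1 ((A (i + 1))⁻¹ * vseq i)) := by
        rw [hwi]; unfold Garside.tauPow; group
      rw [eX, eY, S.gcd_mul_left]
      rw [mul_inv_cancel_left]

end GarsideFormal
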